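/- Let H be an abelian group, M a subgroup of Aut(H,+), and π : M → H a bijection satisfying π(f∘g) = π(f) + f(π(g)) for all f,g ∈ M. Then the operation x·y := x + π⁻¹(x)(y) makes H into a left brace (with the given addition) whose socle is trivial and whose multiplicative group (H,·) is isomorphic to M. -/

import Mathlib

/-- Let `H` be an abelian group, `M` a subgroup of `Aut(H,+)`, and `π : M → H` a
bijection with `π(f∘g) = π(f) + f(π(g))`. Then `x·y := x + π⁻¹(x)(y)` makes `H` a left
brace with trivial socle whose multiplicative group is isomorphic to `M`. -/
theorem brace_from_bijective_cocycle (H : Type*) [AddCommGroup H]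
    (M : AddSubgroup (AddAut H)) (π : M ≃ H)
    (hπ : ∀ f g : M, π (f + g) = π f + (f : AddAut H) (π g)) :
    ∀ mul : H → H → H, (∀ x y : H, mul x y = x + (π.symm x : AddAut H) y) →
      (∀ x y z : H, mul (mul x y) z = mul x (mul y z)) ∧
      (∀ x : H, mul 0 x = x ∧ mul x 0 = x) ∧
      (∀ x : H, ∃ y : H, mul x y = 0 ∧ mul y x = 0) ∧
      (∀ a b c : H, mul a (b + c) + a = mul a b + mul a c) ∧
      ({x : H | ∀ y : H, mul x y - x = y} = {0}) ∧
      (∃ e : H ≃ M, ∀ x y : H, e (mul x y) = e x + e y) := by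
  intro mul hmul
  have hπ1 : π 0 = 0 := by
    have h := hπ 0 0
    simp only [add_zero, ZeroMemClass.coe_zero, AddAut.zero_apply] at h
    exact (left_eq_add.mp h)
  have hs0 : π.symm 0 = 0 := by
    rw [← hπ1, Equiv.symm_apply_apply]
  -- key: mul in terms of the group structure on M
  have key : ∀ x y : H, mul x y = π (π.symm x + π.symm y) := by
    intro x y
    rw [hmul, hπ, Equiv.apply_symm_apply, Equiv.apply_symm_apply]
  have key' : ∀ x y : H, π.symm (mul x y) = π.symm x + π.symm y := by
    intro x y
    rw [key, Equiv.symm_apply_apply]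
  refine ⟨?_, ?_, ?_, ?_, ?_, ?_⟩
  · intro x y z
    rw [key, key, key, key, Equiv.symm_apply_apply, Equiv.symm_apply_apply, add_assoc]
  · intro x
    constructor
    · rw [hmul, hs0]
      simp
    · rw [key]
      rw [hs0, add_zero, Equiv.apply_symm_apply]
  · intro x
    refine ⟨π (-(π.symm x)), ?_, ?_⟩
    · rw [key, Equiv.symm_apply_apply, add_neg_cancel, hπ1]
    · rw [key, Equiv.symm_apply_apply, neg_add_cancel, hπ1]
  · intro a b c
    rw [hmul, hmul, hmul, map_add]
    abel
  · ext x
    simp only [Set.mem_setOf_eq, Set.mem_singleton_iff]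
    constructor
    · intro h
      have h1 : (π.symm x : M) = 0 := by
        apply Subtype.ext
        ext y
        have := h y
        rw [hmul] at this
        simpa using this
      have := congrArg π h1
      rwa [Equiv.apply_symm_apply, hπ1] at this
    · intro h y
      subst h
      rw [hmul, hs0]
      simp
  · exact ⟨π.symm, key'⟩
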